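/- In any run of MMA⁻ on a finite equation set E, if action (5') is performed at some step, then E is not unifiable (and neither is the equation set current at that step). -/

import Mathlib

/-! # First-order terms, substitutions, unification -/

inductive Term (F : Type) (V : Type) : Type
  | var : V → Term F V
  | app : F → List (Term F V) → Term F V

namespace Term

variable {F V : Type}

/-- The variable `v` occurs in the term. -/
inductive VarIn (v : V) : Term F V → Prop
  | var : VarIn v (Term.var v)
  | app {f : F} {ts : List (Term F V)} {t : Term F V} :
      t ∈ ts → VarIn v t → VarIn v (Term.app f ts)

/-- A term is ground if it contains no variables. -/
def Ground (t : Term F V) : Prop := ∀ v, ¬ VarIn v t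

/-- Application of a substitution (a map from variables to terms) to a term. -/
def subst (σ : V → Term F V) : Term F V → Term F V
  | var x => σ x
  | app f ts => app f (ts.attach.map fun ⟨t, _⟩ => t.subst σ)

/-- Number of occurrences of the variable `v` in a term. -/
def count [DecidableEq V] (v : V) : Term F V → ℕ
  | var x => if x = v then 1 else 0
  | app _ ts => (ts.attach.map fun ⟨t, _⟩ => t.count v).sum

/-- A term (or atom) is linear if no variable occurs in it more than once. -/
def Linear [DecidableEq V] (t : Term F V) : Prop := ∀ v, count v t ≤ 1

def IsVar : Term F V → Prop
  | var _ => True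
  | app _ _ => False

end Term

/-- A substitution. -/
abbrev Subst (F V : Type) := V → Term F V

/-- Composition of substitutions: `(σ.comp η)` is `ση`. -/
def Subst.comp {F V : Type} (σ η : Subst F V) : Subst F V := fun v => (σ v).subst η

/-- The substitution `{X/t}`. -/
def subst1 {F V : Type} [DecidableEq V] (X : V) (t : Term F V) : Subst F V :=
  fun v => if v = X then t else Term.var v

variable {F V : Type}

/-- `σ` unifies the two terms (or atoms) `A` and `H`. -/
def IsUnifierPair (σ : Subst F V) (A H : Term F V) : Prop := A.subst σ = H.subst σ

/-- `σ` is a most general unifier of `A` and `H`. -/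
def IsMGUPair (σ : Subst F V) (A H : Term F V) : Prop :=
  IsUnifierPair σ A H ∧ ∀ τ, IsUnifierPair τ A H → ∃ η, τ = σ.comp η

/-- An equation between terms. -/
abbrev Eqn (F V : Type) := Term F V × Term F V

/-- A set of equations. -/
abbrev EqSet (F V : Type) := Set (Eqn F V)

def Eqn.subst (σ : Subst F V) (e : Eqn F V) : Eqn F V := (e.1.subst σ, e.2.subst σ)

/-- `σ` is a unifier of the equation set `E`. -/
def IsUnifier (σ : Subst F V) (E : EqSet F V) : Prop := ∀ e ∈ E, e.1.subst σ = e.2.subst σ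

def Unifiable (E : EqSet F V) : Prop := ∃ σ, IsUnifier σ E

/-- `σ` is a most general unifier of the equation set `E`. -/
def IsMGU (σ : Subst F V) (E : EqSet F V) : Prop :=
  IsUnifier σ E ∧ ∀ τ, IsUnifier τ E → ∃ η, τ = σ.comp η

/-! # The Martelli–Montanari algorithm (MMA) and its occur-check-less version MMA⁻ -/

/-- The variable `X` occurs in the equation `e`. -/
def occursInEqn (X : V) (e : Eqn F V) : Prop := Term.VarIn X e.1 ∨ Term.VarIn X e.2

/-- The variable `X` occurs in equations of `E` other than `e`. -/
def occursElsewhere (X : V) (e : Eqn F V) (E : EqSet F V) : Prop :=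
  ∃ e' ∈ E, e' ≠ e ∧ occursInEqn X e'

/-- Action (2) of MMA is applicable: `E` contains a clash `f(s₁,…,sₘ) = g(t₁,…,tₙ)`
(distinct function symbols; in a signature with arities, the same name with different
numbers of arguments also counts as distinct symbols). -/
def Clash (E : EqSet F V) : Prop :=
  ∃ f ss g ts, (Term.app f ss, Term.app g ts) ∈ E ∧ (f ≠ g ∨ ss.length ≠ ts.length)

/-- Action (6) of MMA (the occur-check failure) is applicable to `E`. -/
def OccApplicable (E : EqSet F V) : Prop :=
  ∃ X t, (Term.var X, t) ∈ E ∧ Term.var X ≠ t ∧ Term.VarIn X t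

/-- A (non-failing) step of MMA: actions (1), (3), (4), (5). -/
inductive MMAStep [DecidableEq V] : EqSet F V → EqSet F V → Prop
  | decomp {E : EqSet F V} {f : F} {ss ts : List (Term F V)} :
      (Term.app f ss, Term.app f ts) ∈ E → ss.length = ts.length →
      MMAStep E ((E \ {(Term.app f ss, Term.app f ts)}) ∪ {e | e ∈ ss.zip ts})
  | del {E : EqSet F V} {X : V} : (Term.var X, Term.var X) ∈ E →
      MMAStep E (E \ {(Term.var X, Term.var X)})
  | orient {E : EqSet F V} {X : V} {t : Term F V} : (t, Term.var X) ∈ E → ¬ t.IsVar →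
      MMAStep E ((E \ {(t, Term.var X)}) ∪ {(Term.var X, t)})
  | elim {E : EqSet F V} {X : V} {t : Term F V} :
      (Term.var X, t) ∈ E → Term.var X ≠ t → ¬ Term.VarIn X t →
      occursElsewhere X (Term.var X, t) E →
      MMAStep E (insert (Term.var X, t) (Eqn.subst (subst1 X t) '' (E \ {(Term.var X, t)})))

/-- `E'` is reachable from `E` by (non-failing) MMA steps. -/
def MMAReach [DecidableEq V] (E E' : EqSet F V) : Prop := Relation.ReflTransGen MMAStep E E'

/-- `E` is not subject to occur-check: no run of MMA on `E` performs action (6),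
i.e. action (6) is not applicable to any equation set reachable by MMA from `E`. -/
def NSTO [DecidableEq V] (E : EqSet F V) : Prop :=
  ∀ E', MMAReach E E' → ¬ OccApplicable E'

/-- A solved equation set: `X₁=t₁, …, Xₙ=tₙ` with `X₁,…,Xₙ` distinct variables
none of which occurs in any `tᵢ`. -/
def SolvedSet (E : EqSet F V) : Prop :=
  (∀ e ∈ E, ∃ X, e.1 = Term.var X) ∧
  (∀ e ∈ E, ∀ e' ∈ E, e.1 = e'.1 → e = e') ∧
  (∀ e ∈ E, ∀ e' ∈ E, ∀ X, e.1 = Term.var X → ¬ Term.VarIn X e'.2)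

/-- The relation `X ≻_E Y`: for some equation `X = t` of `E`, `Y ∈ Var(t)`. -/
def succRel (E : EqSet F V) (X Y : V) : Prop := ∃ t, (Term.var X, t) ∈ E ∧ Term.VarIn Y t

/-- A semi-solved equation set: `X₁=t₁, …, Xₙ=tₙ` with `X₁,…,Xₙ` distinct variables,
no `tᵢ` equal to `Xᵢ`, and whenever `Xᵢ` occurs in some `tₖ` then `Xᵢ ≻⁺_E Xᵢ`. -/
def SemiSolved (E : EqSet F V) : Prop :=
  (∀ e ∈ E, ∃ X, e.1 = Term.var X) ∧
  (∀ e ∈ E, ∀ e' ∈ E, e.1 = e'.1 → e = e') ∧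
  (∀ e ∈ E, e.1 ≠ e.2) ∧
  (∀ X, (∃ e' ∈ E, Term.VarIn X e'.2) → (∃ t, (Term.var X, t) ∈ E) →
    Relation.TransGen (succRel E) X X)

/-- `σ` is the substitution represented by the (solved) equation set `E`. -/
def Represents (E : EqSet F V) (σ : Subst F V) : Prop :=
  ∀ v, (∃ t, (Term.var v, t) ∈ E ∧ σ v = t) ∨ ((∀ t, (Term.var v, t) ∉ E) ∧ σ v = Term.var v)

/-- There is an occur-check free run of MMA on `E`: a maximal run never performing
action (6), hence ending either by action (2) (failure on a clash) or with success
(no action applicable any more, the final set being solved). (MMA always terminates,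
so runs are finite.) -/
def ExistsOCFreeRun [DecidableEq V] (E : EqSet F V) : Prop :=
  ∃ E', MMAReach E E' ∧ (Clash E' ∨ SolvedSet E')

/-- `u` is obtained from `s` by replacing *some* of the occurrences of the variable `X`
by the term `t`. -/
inductive ReplSome [DecidableEq V] (X : V) (t : Term F V) : Term F V → Term F V → Prop
  | keep (v : V) : ReplSome X t (Term.var v) (Term.var v)
  | repl : ReplSome X t (Term.var X) t
  | app {f : F} {ss ts : List (Term F V)} :
      List.Forall₂ (ReplSome X t) ss ts → ReplSome X t (Term.app f ss) (Term.app f ts)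

def ReplSomeEqn [DecidableEq V] (X : V) (t : Term F V) (e e' : Eqn F V) : Prop :=
  ReplSome X t e.1 e'.1 ∧ ReplSome X t e.2 e'.2

/-- The labels of the actions of MMA⁻. -/
inductive MLabel (F V : Type) where
  | decomp | del | orient
  | elim (X : V) (t : Term F V)
  | elim' (X : V) (t : Term F V)

/-- A configuration of MMA⁻: the current equation set together with the set of
variables on which action (5) has already been performed. -/
abbrev MState (F V : Type) := EqSet F V × Set V

/-- A (non-failing) step of MMA⁻, labelled by the action used: actions (1), (3), (4),
(5) (with condition `X ≠ t` instead of the occur-check `X ∉ Var(t)`), and (5')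
(replacing some occurrences of `X` by `t` in the other equations, allowed only if
action (5) has previously been performed on an equation with left-hand side `X`). -/
inductive MMStepL [DecidableEq V] : MLabel F V → MState F V → MState F V → Prop
  | decomp {E : EqSet F V} {H : Set V} {f : F} {ss ts : List (Term F V)} :
      (Term.app f ss, Term.app f ts) ∈ E → ss.length = ts.length →
      MMStepL MLabel.decomp (E, H)
        ((E \ {(Term.app f ss, Term.app f ts)}) ∪ {e | e ∈ ss.zip ts}, H)
  | del {E : EqSet F V} {H : Set V} {X : V} : (Term.var X, Term.var X) ∈ E →
      MMStepL MLabel.del (E, H) (E \ {(Term.var X, Term.var X)}, H)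
  | orient {E : EqSet F V} {H : Set V} {X : V} {t : Term F V} :
      (t, Term.var X) ∈ E → ¬ t.IsVar →
      MMStepL MLabel.orient (E, H) ((E \ {(t, Term.var X)}) ∪ {(Term.var X, t)}, H)
  | elim {E : EqSet F V} {H : Set V} {X : V} {t : Term F V} :
      (Term.var X, t) ∈ E → Term.var X ≠ t →
      occursElsewhere X (Term.var X, t) E →
      MMStepL (MLabel.elim X t) (E, H)
        (insert (Term.var X, t) (Eqn.subst (subst1 X t) '' (E \ {(Term.var X, t)})),
         insert X H)
  | elim' {E : EqSet F V} {H : Set V} {X : V} {t : Term F V} {g : Eqn F V → Eqn F V} :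
      (Term.var X, t) ∈ E → Term.var X ≠ t →
      occursElsewhere X (Term.var X, t) E → X ∈ H →
      (∀ e ∈ E \ {(Term.var X, t)}, ReplSomeEqn X t e (g e)) →
      MMStepL (MLabel.elim' X t) (E, H)
        (insert (Term.var X, t) (g '' (E \ {(Term.var X, t)})), H)

/-- A (non-failing) step of MMA⁻. -/
def MMStep [DecidableEq V] (s s' : MState F V) : Prop := ∃ l, MMStepL l s s'

/-- Reachability by (non-failing) steps of MMA⁻. A run of MMA⁻ on an equation set `E`
starts in the configuration `(E, ∅)`; it terminates with failure when action (2) is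
performed (a clash is present), and it may terminate with success when the current
equation set is semi-solved. -/
def MMReach [DecidableEq V] (s s' : MState F V) : Prop := Relation.ReflTransGen MMStep s s'

set_option linter.unusedSectionVars false

section Stmt16Aux
variable {F V : Type}

theorem subst_app' (σ : Subst F V) (f : F) (ts : List (Term F V)) :
    (Term.app f ts).subst σ = Term.app f (ts.map (Term.subst σ)) := by
  simp [Term.subst]

theorem varIn_var' {v w : V} : Term.VarIn (F := F) v (Term.var w) ↔ v = w := by
  constructor
  · intro h; cases h; rfl
  · rintro rfl; exact Term.VarIn.var

theorem varIn_app' {v : V} {f : F} {ts : List (Term F V)} :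
    Term.VarIn v (Term.app f ts) ↔ ∃ t ∈ ts, Term.VarIn v t := by
  constructor
  · intro h; cases h with | app ht h => exact ⟨_, ht, h⟩
  · rintro ⟨t, ht, h⟩; exact Term.VarIn.app ht h

def tsize' : Term F V → ℕ
  | .var _ => 1
  | .app _ ts => 1 + (ts.attach.map fun ⟨t, _⟩ => tsize' t).sum

theorem tsize'_app (f : F) (ts : List (Term F V)) :
    tsize' (Term.app f ts) = 1 + (ts.map tsize').sum := by
  simp [tsize']

theorem tsize'_pos (s : Term F V) : 0 < tsize' s := by
  cases s with
  | var v => simp [tsize']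
  | app f ts => rw [tsize'_app]; omega

theorem tsize'_lt {s : Term F V} {f : F} {ts : List (Term F V)} (h : s ∈ ts) :
    tsize' s < tsize' (Term.app f ts) := by
  rw [tsize'_app]
  have : tsize' s ≤ (ts.map tsize').sum := List.le_sum_of_mem (List.mem_map_of_mem h)
  omega

theorem varIn_subst' {σ : Subst F V} {v : V} : ∀ {t : Term F V},
    Term.VarIn v (t.subst σ) ↔ ∃ w, Term.VarIn w t ∧ Term.VarIn v (σ w) := by
  have key : ∀ n (t : Term F V), tsize' t ≤ n →
      (Term.VarIn v (t.subst σ) ↔ ∃ w, Term.VarIn w t ∧ Term.VarIn v (σ w)) := by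
    intro n
    induction n with
    | zero => intro t ht; have := tsize'_pos t; omega
    | succ n ih =>
      intro t ht
      match t with
      | .var x => simp [Term.subst, varIn_var']
      | .app f ts =>
        rw [subst_app', varIn_app']
        constructor
        · rintro ⟨u, hu, hvu⟩
          rw [List.mem_map] at hu
          obtain ⟨s, hs, rfl⟩ := hu
          obtain ⟨w, hws, hw⟩ := (ih s (by have := tsize'_lt (f := f) hs; omega)).1 hvu
          exact ⟨w, Term.VarIn.app hs hws, hw⟩
        · rintro ⟨w, hwt, hw⟩
          rw [varIn_app'] at hwt
          obtain ⟨s, hs, hws⟩ := hwt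
          refine ⟨s.subst σ, List.mem_map_of_mem hs, ?_⟩
          exact (ih s (by have := tsize'_lt (f := f) hs; omega)).2 ⟨w, hws, hw⟩
  intro t; exact key (tsize' t) t le_rfl

/-- occur-check: a variable cannot be unified with a proper term containing it -/
theorem varIn_tsize'_le {σ : Subst F V} {v : V} {t : Term F V} (h : Term.VarIn v t) :
    tsize' (σ v) ≤ tsize' (t.subst σ) := by
  induction h with
  | var => simp [Term.subst]
  | app hmem hin ih =>
    rename_i f ts t0
    rw [subst_app']
    have := tsize'_lt (f := f) (List.mem_map_of_mem (f := Term.subst σ) hmem)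
    omega

theorem no_unify_occur {σ : Subst F V} {X : V} {t : Term F V}
    (hin : Term.VarIn X t) (hne : t ≠ Term.var X) : σ X ≠ t.subst σ := by
  cases t with
  | var w =>
    rw [varIn_var'] at hin; subst hin; exact absurd rfl hne
  | app f ts =>
    cases hin with
    | app hmem hin =>
      intro hEq
      have h1 := varIn_tsize'_le (σ := σ) hin
      have h2 := tsize'_lt (f := f) (List.mem_map_of_mem (f := Term.subst σ) hmem)
      rw [subst_app'] at hEq
      rw [hEq] at h1
      omega

theorem subst1_subst {X : V} {t : Term F V} {σ : Subst F V} [DecidableEq V]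
    (hσ : σ X = t.subst σ) :
    ∀ s : Term F V, (s.subst (subst1 X t)).subst σ = s.subst σ := by
  have key : ∀ n (s : Term F V), tsize' s ≤ n →
      (s.subst (subst1 X t)).subst σ = s.subst σ := by
    intro n
    induction n with
    | zero => intro s hs; have := tsize'_pos s; omega
    | succ n ih =>
      intro s hs
      match s with
      | .var x =>
        by_cases hx : x = X
        · subst hx; simp [Term.subst, subst1, hσ]
        · simp [Term.subst, subst1, hx]
      | .app f ss =>
        rw [subst_app', subst_app', subst_app', List.map_map]
        congr 1
        apply List.map_congr_left
        intro s' hs'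
        exact ih s' (by have := tsize'_lt (f := f) hs'; omega)
  intro s; exact key (tsize' s) s le_rfl

theorem replSome_subst {X : V} {t : Term F V} {σ : Subst F V} [DecidableEq V]
    (hσ : σ X = t.subst σ) :
    ∀ {s u : Term F V}, ReplSome X t s u → s.subst σ = u.subst σ := by
  have key : ∀ n (s u : Term F V), tsize' s ≤ n → ReplSome X t s u →
      s.subst σ = u.subst σ := by
    intro n
    induction n with
    | zero => intro s u hs _; have := tsize'_pos s; omega
    | succ n ih =>
      intro s u hs h
      cases h with
      | keep v => rfl
      | repl => simpa [Term.subst] using hσ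
      | app h2 =>
        rename_i f ss ts
        rw [subst_app', subst_app']
        congr 1
        have hlen := List.Forall₂.length_eq h2
        apply List.ext_getElem (by simp [hlen])
        intro i h1i h2i
        simp only [List.getElem_map]
        simp only [List.length_map] at h1i h2i
        refine ih _ _ ?_ ?_
        · have := tsize'_lt (f := f) (List.getElem_mem h1i)
          omega
        · exact List.forall₂_iff_get.1 h2 |>.2 i h1i h2i
  intro s u h; exact key (tsize' s) s u le_rfl h

theorem map_eq_map_iff_zip {α β γ : Type _} (g : α → γ) (h : β → γ) :
    ∀ (as : List α) (bs : List β), as.length = bs.length →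
      (as.map g = bs.map h ↔ ∀ p ∈ as.zip bs, g p.1 = h p.2) := by
  intro as
  induction as with
  | nil =>
    intro bs hb
    cases bs with
    | nil => simp
    | cons b bs => simp at hb
  | cons a as ih =>
    intro bs hb
    cases bs with
    | nil => simp at hb
    | cons b bs =>
      simp only [List.map_cons, List.zip_cons_cons, List.cons.injEq]
      constructor
      · rintro ⟨h1, h2⟩ p hp
        rcases List.mem_cons.1 hp with rfl | hp
        · exact h1
        · exact (ih bs (by simpa using hb)).1 h2 p hp
      · intro hp
        refine ⟨hp (a, b) List.mem_cons_self, ?_⟩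
        exact (ih bs (by simpa using hb)).2 (fun p h' => hp p (List.mem_cons_of_mem _ h'))

end Stmt16Aux

section Stmt16Main
variable {F V : Type} [DecidableEq V]

/-- `X` occurs in `E` at most as the left-hand side of a single equation `X = t`
with `X ∉ Var(t)`. -/
def Iso (X : V) (E : EqSet F V) : Prop :=
  (∀ e ∈ E, ¬ Term.VarIn X e.2) ∧
  (∀ e ∈ E, Term.VarIn X e.1 → e.1 = Term.var X) ∧
  (∀ e ∈ E, ∀ e' ∈ E, Term.VarIn X e.1 → Term.VarIn X e'.1 → e = e')

theorem Iso.not_occ {Z : V} {t : Term F V} {E : EqSet F V}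
    (hmem : (Term.var Z, t) ∈ E) (hI : Iso Z E) :
    ¬ occursElsewhere Z (Term.var Z, t) E := by
  rintro ⟨e', he', hne, (h1 | h2)⟩
  · exact hne (hI.2.2 e' he' _ hmem h1 Term.VarIn.var)
  · exact hI.1 e' he' h2

theorem stepL_unifier_iff {l : MLabel F V} {s s' : MState F V}
    (h : MMStepL l s s') (σ : Subst F V) : IsUnifier σ s.1 ↔ IsUnifier σ s'.1 := by
  cases h with
  | decomp hmem hlen =>
    rename_i E H f ss ts
    constructor
    · intro hU e he
      rcases he with he | he
      · exact hU e he.1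
      · have := hU _ hmem
        rw [subst_app', subst_app'] at this
        injection this with h1 hmaps
        exact (map_eq_map_iff_zip _ _ ss ts hlen).1 hmaps e he
    · intro hU e he
      by_cases heq : e = (Term.app f ss, Term.app f ts)
      · subst heq
        show (Term.app f ss).subst σ = (Term.app f ts).subst σ
        rw [subst_app', subst_app']
        congr 1
        exact (map_eq_map_iff_zip _ _ ss ts hlen).2
          (fun p hp => hU p (Or.inr hp))
      · exact hU e (Or.inl ⟨he, heq⟩)
  | del hmem =>
    rename_i E H X
    constructor
    · intro hU e he; exact hU e he.1
    · intro hU e he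
      by_cases heq : e = (Term.var X, Term.var X)
      · subst heq; rfl
      · exact hU e ⟨he, heq⟩
  | orient hmem hnv =>
    rename_i E H X t
    constructor
    · intro hU e he
      rcases he with he | he
      · exact hU e he.1
      · rw [Set.mem_singleton_iff] at he; subst he
        exact (hU _ hmem).symm
    · intro hU e he
      by_cases heq : e = (t, Term.var X)
      · subst heq
        exact (hU _ (Or.inr rfl)).symm
      · exact hU e (Or.inl ⟨he, heq⟩)
  | elim hmem hne hocc =>
    rename_i E H X t
    constructor
    · intro hU e he
      have hXt : σ X = t.subst σ := by simpa [Term.subst] using hU _ hmem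
      rcases he with he | he
      · subst he
        exact hU _ hmem
      · obtain ⟨e₀, he₀, rfl⟩ := he
        show (e₀.1.subst (subst1 X t)).subst σ = (e₀.2.subst (subst1 X t)).subst σ
        rw [subst1_subst hXt, subst1_subst hXt]
        exact hU e₀ he₀.1
    · intro hU e he
      have hXt : σ X = t.subst σ := by
        simpa [Term.subst] using hU _ (Set.mem_insert _ _)
      by_cases heq : e = (Term.var X, t)
      · subst heq; simpa [Term.subst] using hXt
      · have := hU _ (Set.mem_insert_iff.2 (Or.inr ⟨e, ⟨he, heq⟩, rfl⟩))
        show e.1.subst σ = e.2.subst σ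
        rwa [show (Eqn.subst (subst1 X t) e).1 = e.1.subst (subst1 X t) from rfl,
          show (Eqn.subst (subst1 X t) e).2 = e.2.subst (subst1 X t) from rfl,
          subst1_subst hXt, subst1_subst hXt] at this
  | elim' hmem hne hocc hXH hg =>
    rename_i E H X t g
    constructor
    · intro hU e he
      have hXt : σ X = t.subst σ := by simpa [Term.subst] using hU _ hmem
      rcases he with he | he
      · subst he
        exact hU _ hmem
      · obtain ⟨e₀, he₀, rfl⟩ := he
        obtain ⟨h1, h2⟩ := hg e₀ he₀
        rw [← replSome_subst hXt h1, ← replSome_subst hXt h2]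
        exact hU e₀ he₀.1
    · intro hU e he
      have hXt : σ X = t.subst σ := by
        simpa [Term.subst] using hU _ (Set.mem_insert _ _)
      by_cases heq : e = (Term.var X, t)
      · subst heq; simpa [Term.subst] using hXt
      · have hmem' : e ∈ E \ {(Term.var X, t)} := ⟨he, heq⟩
        have := hU _ (Set.mem_insert_iff.2 (Or.inr ⟨e, hmem', rfl⟩))
        obtain ⟨h1, h2⟩ := hg e hmem'
        show e.1.subst σ = e.2.subst σ
        rw [replSome_subst hXt h1, replSome_subst hXt h2]
        exact this

theorem step_unifiable_iff {s s' : MState F V} (h : MMStep s s') :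
    Unifiable s.1 ↔ Unifiable s'.1 := by
  obtain ⟨l, h⟩ := h
  exact exists_congr (fun σ => stepL_unifier_iff h σ)

theorem reach_unifiable {s s' : MState F V} (h : MMReach s s') :
    Unifiable s.1 → Unifiable s'.1 := by
  induction h with
  | refl => exact id
  | tail _ h2 ih => exact fun hU => (step_unifiable_iff h2).1 (ih hU)

theorem step_inv {s s' : MState F V} (h : MMStep s s')
    (ih : Unifiable s.1 → ∀ Z ∈ s.2, Iso Z s.1) :
    Unifiable s'.1 → ∀ Z ∈ s'.2, Iso Z s'.1 := by
  intro hU₂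
  have hU₁ : Unifiable s.1 := (step_unifiable_iff h).2 hU₂
  have I₁ := ih hU₁
  obtain ⟨l, h⟩ := h
  cases h with
  | decomp hmem hlen =>
    rename_i E H f ss ts
    intro Z hZ
    obtain ⟨i1, i2, i3⟩ := I₁ Z hZ
    have hz : ∀ p ∈ ss.zip ts, ¬ Term.VarIn Z p.1 ∧ ¬ Term.VarIn Z p.2 := by
      intro p hp
      obtain ⟨hp1, hp2⟩ := List.of_mem_zip hp
      constructor
      · intro hv
        have := i2 _ hmem (Term.VarIn.app hp1 hv)
        exact absurd this (by simp)
      · exact fun hv => i1 _ hmem (Term.VarIn.app hp2 hv)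
    refine ⟨?_, ?_, ?_⟩
    · rintro e (he | he)
      · exact i1 e he.1
      · exact (hz e he).2
    · rintro e (he | he)
      · exact i2 e he.1
      · exact fun hv => absurd hv (hz e he).1
    · rintro e (he | he) e' (he' | he') hv hv'
      · exact i3 e he.1 e' he'.1 hv hv'
      · exact absurd hv' (hz e' he').1
      · exact absurd hv (hz e he).1
      · exact absurd hv (hz e he).1
  | del hmem =>
    rename_i E H X
    intro Z hZ
    obtain ⟨i1, i2, i3⟩ := I₁ Z hZ
    exact ⟨fun e he => i1 e he.1, fun e he => i2 e he.1,
      fun e he e' he' => i3 e he.1 e' he'.1⟩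
  | orient hmem hnv =>
    rename_i E H X t
    intro Z hZ
    obtain ⟨i1, i2, i3⟩ := I₁ Z hZ
    have hnt : ¬ Term.VarIn Z t := by
      intro hv
      have := i2 _ hmem hv
      subst this
      exact hnv trivial
    have hnX : ¬ Term.VarIn Z (Term.var X) := i1 _ hmem
    refine ⟨?_, ?_, ?_⟩
    · rintro e (he | he)
      · exact i1 e he.1
      · subst he; exact hnt
    · rintro e (he | he)
      · exact i2 e he.1
      · subst he
        exact fun hv => absurd hv hnX
    · rintro e (he | he) e' (he' | he') hv hv'
      · exact i3 e he.1 e' he'.1 hv hv'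
      · subst he'; exact absurd hv' hnX
      · subst he; exact absurd hv hnX
      · subst he; exact absurd hv hnX
  | elim hmem hne hocc =>
    rename_i E H X t
    intro Z hZ
    by_cases hZX : Z = X
    · subst hZX
      -- use unifiability of the new set to rule out Z ∈ Var(t)
      obtain ⟨σ, hσ⟩ := hU₂
      have hXt : σ Z = t.subst σ := by
        simpa [Term.subst] using hσ _ (Set.mem_insert _ _)
      have hnt : ¬ Term.VarIn Z t := by
        intro hv
        exact no_unify_occur hv (fun hEq => hne hEq.symm) hXt
      have noZ : ∀ s : Term F V, ¬ Term.VarIn Z (s.subst (subst1 Z t)) := by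
        intro s hv
        rw [varIn_subst'] at hv
        obtain ⟨w, hws, hw⟩ := hv
        by_cases hwZ : w = Z
        · subst hwZ; simp [subst1] at hw; exact hnt hw
        · simp [subst1, hwZ, varIn_var'] at hw; exact hwZ hw.symm
      refine ⟨?_, ?_, ?_⟩
      · rintro e (he | he)
        · subst he; exact hnt
        · obtain ⟨e₀, he₀, rfl⟩ := he; exact noZ e₀.2
      · rintro e (he | he)
        · subst he; exact fun _ => rfl
        · obtain ⟨e₀, he₀, rfl⟩ := he
          exact fun hv => absurd hv (noZ e₀.1)
      · rintro e (he | he) e' (he' | he') hv hv'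
        · rw [he, he']
        · obtain ⟨e₀, he₀, rfl⟩ := he'; exact absurd hv' (noZ e₀.1)
        · obtain ⟨e₀, he₀, rfl⟩ := he; exact absurd hv (noZ e₀.1)
        · obtain ⟨e₀, he₀, rfl⟩ := he; exact absurd hv (noZ e₀.1)
    · -- Z ∈ H
      have hZH : Z ∈ H := by
        rcases Set.mem_insert_iff.1 hZ with h | h
        · exact absurd h hZX
        · exact h
      obtain ⟨i1, i2, i3⟩ := I₁ Z hZH
      have hnt : ¬ Term.VarIn Z t := i1 _ hmem
      have transfer : ∀ s : Term F V, Term.VarIn Z (s.subst (subst1 X t)) →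
          Term.VarIn Z s := by
        intro s hv
        rw [varIn_subst'] at hv
        obtain ⟨w, hws, hw⟩ := hv
        by_cases hwX : w = X
        · subst hwX; simp [subst1] at hw; exact absurd hw hnt
        · simp [subst1, hwX, varIn_var'] at hw; subst hw; exact hws
      have hvX : ¬ Term.VarIn (F := F) Z (Term.var X) := by
        rw [varIn_var']; exact hZX
      refine ⟨?_, ?_, ?_⟩
      · rintro e (he | he)
        · subst he; exact hnt
        · obtain ⟨e₀, he₀, rfl⟩ := he
          exact fun hv => i1 e₀ he₀.1 (transfer _ hv)
      · rintro e (he | he)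
        · subst he
          exact fun hv => absurd hv hvX
        · obtain ⟨e₀, he₀, rfl⟩ := he
          intro hv
          have h1 : Term.VarIn Z e₀.1 := transfer _ hv
          have h2 := i2 e₀ he₀.1 h1
          show e₀.1.subst (subst1 X t) = Term.var Z
          rw [h2]; simp [Term.subst, subst1, hZX]
      · rintro e (he | he) e' (he' | he') hv hv'
        · rw [he, he']
        · subst he; exact absurd hv hvX
        · subst he'; exact absurd hv' hvX
        · obtain ⟨e₀, he₀, rfl⟩ := he
          obtain ⟨e₀', he₀', rfl⟩ := he'
          have := i3 e₀ he₀.1 e₀' he₀'.1 (transfer _ hv) (transfer _ hv')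
          rw [this]
  | elim' hmem hne hocc hXH hg =>
    rename_i E H X t g
    exact absurd hocc (Iso.not_occ hmem (I₁ X hXH))

theorem reach_inv {E : EqSet F V} {s : MState F V} (h : MMReach (E, ∅) s) :
    Unifiable s.1 → ∀ Z ∈ s.2, Iso Z s.1 := by
  induction h with
  | refl => exact fun _ Z hZ => absurd hZ (Set.notMem_empty Z)
  | tail _ h2 ih => exact step_inv h2 ih

end Stmt16Main


/-- In any run of MMA⁻ on a finite equation set `E`, if action (5')
is performed at some step, then `E` is not unifiable, and neither is the equation
set current at that step. -/
theorem stmt16 {F V : Type} [DecidableEq V] (E : EqSet F V) (hfin : E.Finite) :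
    ∀ (E' : EqSet F V) (H : Set V), MMReach (E, ∅) (E', H) →
      ∀ (X : V) (t : Term F V) (s' : MState F V),
        MMStepL (MLabel.elim' X t) (E', H) s' →
        ¬ Unifiable E ∧ ¬ Unifiable E' := by 
  intro E' H hreach X t s' hstep
  have hnU' : ¬ Unifiable E' := by
    intro hU
    cases hstep with
    | elim' hmem hne hocc hXH hg =>
      exact absurd hocc (Iso.not_occ hmem (reach_inv hreach hU X hXH))
  exact ⟨fun hU => hnU' (reach_unifiable hreach hU), hnU'⟩
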